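/- Let K be a field of characteristic zero, X a finite connected poset, and fix u_0 ∈ X. Then each φ ∈ Δ(I(X,K)) is of the form φ = ad_c + φ_σ + φ_κ for a unique c ∈ Z([I(X,K),I(X,K)]), a unique map σ : X²_< → K which is constant on chains and constant on cycles in X, and a unique map κ : X → K. -/

import Mathlib

open scoped Classical

attribute [local instance] LieRing.ofAssociativeRing

noncomputable section

/-- A `1/2`-derivation of a Lie algebra `L` over `K`:
`φ ⁅a, b⁆ = (1/2) • (⁅φ a, b⁆ + ⁅a, φ b⁆)`. -/
def IsHalfDerivation (K L : Type*) [Field K] [LieRing L] [LieAlgebra K L]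
    (φ : L →ₗ[K] L) : Prop :=
  ∀ a b : L, φ ⁅a, b⁆ = (2⁻¹ : K) • (⁅φ a, b⁆ + ⁅a, φ b⁆)

/-- The derived subalgebra `[L, L]` (the span of all brackets), as a `K`-submodule. -/
def derivedSpan (K L : Type*) [Field K] [LieRing L] [LieAlgebra K L] : Submodule K L :=
  Submodule.span K {z : L | ∃ a b : L, z = ⁅a, b⁆}

/-- The standard basis element `e_{xy}` (for `x ≤ y`) of the incidence algebra. -/
def eI (K : Type*) {X : Type*} [Field K] [PartialOrder X] [DecidableEq X]
    (x y : X) (h : x ≤ y) : IncidenceAlgebra K X :=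
  ⟨fun u v => if x = u ∧ y = v then (1 : K) else 0, by
    intro u v huv
    show (if x = u ∧ y = v then (1 : K) else 0) = 0
    rw [if_neg]; rintro ⟨rfl, rfl⟩; exact huv h⟩

/-- Diagonal elements of the incidence algebra (the subspace `D(X,K)`). -/
def IsDiagI {K X : Type*} [Zero K] [LE X] (f : IncidenceAlgebra K X) : Prop :=
  ∀ x y : X, x ≠ y → f x y = 0

/-- A walk `u 0, u 1, …, u m` in a poset: consecutive vertices are comparable and
cover one another (`l(x,y) = 1`). -/
def IsWalkOn {X : Type*} [PartialOrder X] (u : ℕ → X) (m : ℕ) : Prop :=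
  ∀ i < m, u i ⋖ u (i + 1) ∨ u (i + 1) ⋖ u i

/-- A poset is connected if any two of its elements are joined by a walk. -/
def ConnectedPoset (X : Type*) [PartialOrder X] : Prop :=
  ∀ x y : X, ∃ (u : ℕ → X) (m : ℕ), IsWalkOn u m ∧ u 0 = x ∧ u m = y

/-- The set `X²_<` of pairs `(x, y)` with `x < y`. -/
def LtPairs (X : Type*) [PartialOrder X] : Type _ := {p : X × X // p.1 < p.2}

/-- The value of `σ : X²_< → K` at `(x, y)`, extended by `0` to all pairs. -/
def sigVal {K X : Type*} [Field K] [PartialOrder X] (σ : LtPairs X → K) (x y : X) : K :=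
  if h : x < y then σ ⟨(x, y), h⟩ else 0

/-- `s⁺_{σ,Γ}(x) = Σ_{x = u i < u (i+1)} σ (x, u (i+1))`. -/
def sP {K X : Type*} [Field K] [PartialOrder X] (σ : LtPairs X → K)
    (u : ℕ → X) (m : ℕ) (x : X) : K :=
  ∑ i ∈ Finset.range m, if x = u i then sigVal σ x (u (i + 1)) else 0

/-- `s⁻_{σ,Γ}(x) = Σ_{u i > u (i+1) = x} σ (x, u i)`. -/
def sM {K X : Type*} [Field K] [PartialOrder X] (σ : LtPairs X → K)
    (u : ℕ → X) (m : ℕ) (x : X) : K :=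
  ∑ i ∈ Finset.range m, if x = u (i + 1) then sigVal σ x (u i) else 0

/-- `t⁺_{σ,Γ}(x) = Σ_{x = u i > u (i+1)} σ (u (i+1), x)`. -/
def tP {K X : Type*} [Field K] [PartialOrder X] (σ : LtPairs X → K)
    (u : ℕ → X) (m : ℕ) (x : X) : K :=
  ∑ i ∈ Finset.range m, if x = u i then sigVal σ (u (i + 1)) x else 0

/-- `t⁻_{σ,Γ}(x) = Σ_{u i < u (i+1) = x} σ (u i, x)`. -/
def tM {K X : Type*} [Field K] [PartialOrder X] (σ : LtPairs X → K)
    (u : ℕ → X) (m : ℕ) (x : X) : K :=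
  ∑ i ∈ Finset.range m, if x = u (i + 1) then sigVal σ (u i) x else 0

/-- A cycle: a closed walk `u 0, …, u m = u 0` with `m ≥ 4` such that repeated
vertices occur only at the pair of indices `{0, m}`. -/
def IsCycleW {X : Type*} [PartialOrder X] (u : ℕ → X) (m : ℕ) : Prop :=
  IsWalkOn u m ∧ u m = u 0 ∧ 4 ≤ m ∧
    ∀ i ≤ m, ∀ j ≤ m, i ≠ j → u i = u j → (i = 0 ∧ j = m) ∨ (i = m ∧ j = 0)

/-- `σ` is constant on cycles. -/
def ConstOnCycles {K X : Type*} [Field K] [PartialOrder X] (σ : LtPairs X → K) : Prop :=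
  ∀ (u : ℕ → X) (m : ℕ), IsCycleW u m →
    ∃ k : K, ∀ i < m,
      (∀ h : u i < u (i + 1), σ ⟨(u i, u (i + 1)), h⟩ = k) ∧
      (∀ h : u (i + 1) < u i, σ ⟨(u (i + 1), u i), h⟩ = k)

/-- `σ` is constant on chains: `σ (x, y) = σ (u, v)` whenever `x < y` and `u < v` all
belong to a common chain, i.e. `{x, y, u, v}` is pairwise comparable. -/
def ConstOnChains {K X : Type*} [Field K] [PartialOrder X] (σ : LtPairs X → K) : Prop :=
  ∀ (x y u v : X) (h1 : x < y) (h2 : u < v),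
    (x ≤ u ∨ u ≤ x) → (x ≤ v ∨ v ≤ x) → (y ≤ u ∨ u ≤ y) → (y ≤ v ∨ v ≤ y) →
      σ ⟨(x, y), h1⟩ = σ ⟨(u, v), h2⟩
set_option linter.unusedSectionVars false
namespace St17

open IncidenceAlgebra

variable {K X : Type*} [Field K] [PartialOrder X] [DecidableEq X] [LocallyFiniteOrder X]

lemma eI_apply (x y : X) (h : x ≤ y) (u v : X) :
    eI K x y h u v = if x = u ∧ y = v then (1:K) else 0 := rfl

lemma congr_app {f g : IncidenceAlgebra K X} (h : f = g) (a b : X) : f a b = g a b := by rw [h]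

lemma mul_eI_apply (f : IncidenceAlgebra K X) (x y : X) (h : x ≤ y) (a b : X) :
    (f * eI K x y h) a b = if y = b then f a x else 0 := by
  rw [IncidenceAlgebra.mul_apply]
  by_cases hyb : y = b
  · subst hyb
    rw [if_pos rfl]
    by_cases hax : a ≤ x
    · rw [Finset.sum_eq_single_of_mem x (Finset.mem_Icc.2 ⟨hax, h⟩)]
      · rw [eI_apply, if_pos ⟨rfl, rfl⟩, mul_one]
      · intro w _ hwx
        rw [eI_apply, if_neg (by rintro ⟨rfl, -⟩; exact hwx rfl), mul_zero]
    · rw [IncidenceAlgebra.apply_eq_zero_of_not_le hax]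
      refine Finset.sum_eq_zero fun w hw => ?_
      rw [eI_apply, if_neg (by rintro ⟨rfl, -⟩; exact hax (Finset.mem_Icc.1 hw).1), mul_zero]
  · rw [if_neg hyb]
    refine Finset.sum_eq_zero fun w _ => ?_
    rw [eI_apply, if_neg (by rintro ⟨-, rfl⟩; exact hyb rfl), mul_zero]

lemma eI_mul_apply (f : IncidenceAlgebra K X) (x y : X) (h : x ≤ y) (a b : X) :
    (eI K x y h * f) a b = if x = a then f y b else 0 := by
  rw [IncidenceAlgebra.mul_apply]
  by_cases hxa : x = a
  · subst hxa
    rw [if_pos rfl]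
    by_cases hyb : y ≤ b
    · rw [Finset.sum_eq_single_of_mem y (Finset.mem_Icc.2 ⟨h, hyb⟩)]
      · rw [eI_apply, if_pos ⟨rfl, rfl⟩, one_mul]
      · intro w _ hwy
        rw [eI_apply, if_neg (by rintro ⟨-, rfl⟩; exact hwy rfl), zero_mul]
    · rw [IncidenceAlgebra.apply_eq_zero_of_not_le hyb]
      refine Finset.sum_eq_zero fun w hw => ?_
      rw [eI_apply, if_neg (by rintro ⟨-, rfl⟩; exact hyb (Finset.mem_Icc.1 hw).2), zero_mul]
  · rw [if_neg hxa]
    refine Finset.sum_eq_zero fun w _ => ?_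
    rw [eI_apply, if_neg (by rintro ⟨rfl, -⟩; exact hxa rfl), zero_mul]

lemma lie_apply (f g : IncidenceAlgebra K X) (a b : X) :
    ⁅f, g⁆ a b = (f * g) a b - (g * f) a b := by
  rw [Ring.lie_def, IncidenceAlgebra.sub_apply]

lemma lie_eI_apply (f : IncidenceAlgebra K X) (x y : X) (h : x ≤ y) (a b : X) :
    ⁅f, eI K x y h⁆ a b
      = (if y = b then f a x else 0) - (if x = a then f y b else 0) := by
  rw [lie_apply, mul_eI_apply, eI_mul_apply]

lemma eI_lie_apply (f : IncidenceAlgebra K X) (x y : X) (h : x ≤ y) (a b : X) :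
    ⁅eI K x y h, f⁆ a b
      = (if x = a then f y b else 0) - (if y = b then f a x else 0) := by
  rw [lie_apply, eI_mul_apply, mul_eI_apply]

lemma mul_diag (f g : IncidenceAlgebra K X) (x : X) : (f * g) x x = f x x * g x x := by
  rw [IncidenceAlgebra.mul_apply, Finset.Icc_self, Finset.sum_singleton]

lemma lie_diag (f g : IncidenceAlgebra K X) (x : X) : ⁅f, g⁆ x x = 0 := by
  rw [lie_apply, mul_diag, mul_diag, mul_comm, sub_self]

lemma lie_e_e (z v : X) (h : z ≠ v) :
    ⁅eI K z z le_rfl, eI K v v (le_refl v)⁆ = 0 := by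
  ext a b _
  rw [eI_lie_apply, IncidenceAlgebra.zero_apply, eI_apply, eI_apply]
  split_ifs <;> simp_all <;> grind

lemma lie_e_eI (x y : X) (h : x ≤ y) (hne : x ≠ y) :
    ⁅eI K x x le_rfl, eI K x y h⁆ = eI K x y h := by
  ext a b _
  rw [eI_lie_apply, eI_apply, eI_apply, eI_apply]
  split_ifs <;> simp_all <;> grind

lemma lie_ey_eI (x y : X) (h : x ≤ y) (hne : x ≠ y) :
    ⁅eI K y y le_rfl, eI K x y h⁆ = -(eI K x y h) := by
  ext a b _
  rw [eI_lie_apply, eI_apply, eI_apply, IncidenceAlgebra.neg_apply, eI_apply]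
  split_ifs <;> simp_all <;> grind

lemma lie_eI_e (x y v : X) (h : x ≤ y) (h1 : x ≠ v) (h2 : y ≠ v) :
    ⁅eI K x y h, eI K v v le_rfl⁆ = 0 := by
  ext a b _
  rw [eI_lie_apply, IncidenceAlgebra.zero_apply, eI_apply, eI_apply]
  split_ifs <;> simp_all <;> grind

end St17
namespace St17

variable {K X : Type*} [Field K] [PartialOrder X] [DecidableEq X] [LocallyFiniteOrder X]

section EntryLemmas
variable (f : IncidenceAlgebra K X)

lemma lieR_e (v u : X) (h : v ≠ u) : ⁅f, eI K v v le_rfl⁆ u v = f u v := by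
  rw [lie_eI_apply]; simp [h]

lemma lieL_e (z : X) (u v : X) (h1 : z ≠ u) (h2 : z ≠ v) :
    ⁅eI K z z le_rfl, f⁆ u v = 0 := by
  rw [eI_lie_apply]; simp [h1, h2]

lemma lieL_e' (u v : X) (h : u ≠ v) : ⁅eI K u u le_rfl, f⁆ u v = f u v := by
  rw [eI_lie_apply]; simp [h]

lemma lieR_eI {w u : X} (h : w ≤ u) (v : X) (hneq : u ≠ v) :
    ⁅f, eI K w u h⁆ w v = -(f u v) := by
  rw [lie_eI_apply]; simp [hneq]

lemma lieL_eI {x y : X} (h : x ≤ y) (v : X) (hyv : y ≠ v) :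
    ⁅eI K x y h, f⁆ x v = f y v := by
  rw [eI_lie_apply]; simp [hyv]

lemma lieR_eI' {v t : X} (h : v ≤ t) (u : X) (hvu : v ≠ u) :
    ⁅f, eI K v t h⁆ u t = f u v := by
  rw [lie_eI_apply]; simp [hvu]

lemma lieL_e3 (t u : X) (h : t ≠ u) : ⁅eI K t t le_rfl, f⁆ u t = -(f u t) := by
  rw [eI_lie_apply]; simp [h]

lemma lieR_e2 (u t : X) (h : u ≠ t) : ⁅f, eI K u u le_rfl⁆ u t = -(f u t) := by
  rw [lie_eI_apply]; simp [h, fun hh : u = t => h hh]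

lemma lieL_eI2 {v t : X} (h : v ≤ t) (u : X) (hvu : v ≠ u) :
    ⁅eI K v t h, f⁆ u t = -(f u v) := by
  rw [eI_lie_apply]; simp [hvu]

end EntryLemmas

section Main
variable [CharZero K]

lemma halfent {φ : IncidenceAlgebra K X →ₗ[K] IncidenceAlgebra K X}
    (hφ : IsHalfDerivation K (IncidenceAlgebra K X) φ) (a b : IncidenceAlgebra K X) (u v : X) :
    ⁅φ a, b⁆ u v + ⁅a, φ b⁆ u v = 2 * φ ⁅a, b⁆ u v := by
  have h := congr_app (hφ a b) u v
  rw [IncidenceAlgebra.constSMul_apply, IncidenceAlgebra.add_apply, smul_eq_mul] at h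
  linear_combination (-2 : K) * h

variable {φ : IncidenceAlgebra K X →ₗ[K] IncidenceAlgebra K X}

lemma L1 (hφ : IsHalfDerivation K (IncidenceAlgebra K X) φ) {z u v : X}
    (huv : u < v) (hzu : z ≠ u) (hzv : z ≠ v) : φ (eI K z z le_rfl) u v = 0 := by
  have h := halfent hφ (eI K z z le_rfl) (eI K v v le_rfl) u v
  rw [lie_e_e z v hzv, map_zero, IncidenceAlgebra.zero_apply, mul_zero,
      lieR_e _ v u huv.ne', lieL_e _ z u v hzu hzv] at h
  linear_combination h

lemma L2 (hφ : IsHalfDerivation K (IncidenceAlgebra K X) φ) {u v : X} (huv : u < v) :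
    φ (eI K u u le_rfl) u v + φ (eI K v v le_rfl) u v = 0 := by
  have h := halfent hφ (eI K u u le_rfl) (eI K v v le_rfl) u v
  rw [lie_e_e u v huv.ne, map_zero, IncidenceAlgebra.zero_apply, mul_zero,
      lieR_e _ v u huv.ne', lieL_e' _ u v huv.ne] at h
  linear_combination h

lemma L3 (hφ : IsHalfDerivation K (IncidenceAlgebra K X) φ) {w u v : X}
    (hwu : w < u) (huv : u < v) : φ (eI K w u hwu.le) w v = 0 := by
  have hwv : w ≠ v := (hwu.trans huv).ne
  have h := halfent hφ (eI K w w le_rfl) (eI K w u hwu.le) w v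
  rw [lie_e_eI w u hwu.le hwu.ne, lieR_eI _ hwu.le v huv.ne,
      lieL_e' _ w v hwv, L1 hφ huv hwu.ne hwv] at h
  linear_combination -h

lemma L4 (hφ : IsHalfDerivation K (IncidenceAlgebra K X) φ) {w u v : X}
    (hwu : w < u) (huv : u < v) :
    φ (eI K w u hwu.le) w v + φ (eI K v v le_rfl) u v = 0 := by
  have hwv : w ≠ v := (hwu.trans huv).ne
  have h := halfent hφ (eI K w u hwu.le) (eI K v v le_rfl) w v
  rw [lie_eI_e w u v hwu.le hwv huv.ne, map_zero, IncidenceAlgebra.zero_apply, mul_zero,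
      lieR_e _ v w (Ne.symm hwv), lieL_eI _ hwu.le v huv.ne] at h
  linear_combination h

lemma L5 (hφ : IsHalfDerivation K (IncidenceAlgebra K X) φ) {w u v : X}
    (hwu : w < u) (huv : u < v) : φ (eI K v v le_rfl) u v = 0 := by
  linear_combination L4 hφ hwu huv - L3 hφ hwu huv

lemma L6 (hφ : IsHalfDerivation K (IncidenceAlgebra K X) φ) {u v t : X}
    (huv : u < v) (hvt : v < t) : φ (eI K v t hvt.le) u t = 0 := by
  have hut : u ≠ t := (huv.trans hvt).ne
  have h := halfent hφ (eI K t t le_rfl) (eI K v t hvt.le) u t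
  rw [lie_ey_eI v t hvt.le hvt.ne, map_neg, IncidenceAlgebra.neg_apply,
      lieR_eI' _ hvt.le u huv.ne', L1 hφ huv (Ne.symm hut) hvt.ne',
      lieL_e3 _ t u (Ne.symm hut)] at h
  linear_combination h

lemma L7 (hφ : IsHalfDerivation K (IncidenceAlgebra K X) φ) {u v t : X}
    (huv : u < v) (hvt : v < t) : φ (eI K u u le_rfl) u v = 0 := by
  have hut : u ≠ t := (huv.trans hvt).ne
  have h := halfent hφ (eI K v t hvt.le) (eI K u u le_rfl) u t
  rw [lie_eI_e v t u hvt.le (Ne.symm huv.ne) (Ne.symm (huv.trans hvt).ne), map_zero,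
      IncidenceAlgebra.zero_apply, mul_zero, lieR_e2 _ u t hut,
      lieL_eI2 _ hvt.le u (Ne.symm huv.ne)] at h
  linear_combination -h - L6 hφ huv hvt

lemma L8 (hφ : IsHalfDerivation K (IncidenceAlgebra K X) φ) {u v t : X}
    (huv : u < v) (hvt : v < t) : φ (eI K v v le_rfl) u v = 0 := by
  linear_combination L2 hφ huv - L7 hφ huv hvt

end Main

section CElt
variable [Fintype X]

lemma sum_apply {ι : Type*} (s : Finset ι) (g : ι → IncidenceAlgebra K X) (a b : X) :
    (∑ i ∈ s, g i) a b = ∑ i ∈ s, g i a b :=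
  map_sum (AddMonoidHom.mk' (fun f : IncidenceAlgebra K X => f a b) (fun _ _ => rfl)) g s

/-- The central element `c`. -/
def cElt (φ : IncidenceAlgebra K X →ₗ[K] IncidenceAlgebra K X) : IncidenceAlgebra K X :=
  ∑ p : X × X, if h : p.1 < p.2 then
    (φ (eI K p.2 p.2 le_rfl) p.1 p.2) • eI K p.1 p.2 h.le else 0

lemma cElt_apply (φ : IncidenceAlgebra K X →ₗ[K] IncidenceAlgebra K X) (a b : X) :
    cElt φ a b = if a < b then φ (eI K b b le_rfl) a b else 0 := by
  rw [cElt, sum_apply, Finset.sum_eq_single (a, b)]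
  · by_cases hab : a < b
    · rw [dif_pos hab, if_pos hab, IncidenceAlgebra.constSMul_apply, smul_eq_mul,
        eI_apply, if_pos ⟨rfl, rfl⟩, mul_one]
    · rw [dif_neg hab, if_neg hab, IncidenceAlgebra.zero_apply]
  · intro p _ hp
    by_cases h : p.1 < p.2
    · rw [dif_pos h, IncidenceAlgebra.constSMul_apply, smul_eq_mul, eI_apply, if_neg, mul_zero]
      rintro ⟨h1, h2⟩
      exact hp (Prod.ext h1 h2)
    · rw [dif_neg h, IncidenceAlgebra.zero_apply]
  · intro hmem; exact absurd (Finset.mem_univ _) hmem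

variable [CharZero K] {φ : IncidenceAlgebra K X →ₗ[K] IncidenceAlgebra K X}

lemma cElt_lt {a b : X} (h : cElt φ a b ≠ 0) : a < b := by
  by_contra hab
  rw [cElt_apply, if_neg hab] at h
  exact h rfl

lemma cElt_min (hφ : IsHalfDerivation K (IncidenceAlgebra K X) φ) {a b : X}
    (h : cElt φ a b ≠ 0) : ∀ t, ¬ t < a := by
  intro t hta
  have hab := cElt_lt h
  rw [cElt_apply, if_pos hab, L5 hφ hta hab] at h
  exact h rfl

lemma cElt_max (hφ : IsHalfDerivation K (IncidenceAlgebra K X) φ) {a b : X}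
    (h : cElt φ a b ≠ 0) : ∀ t, ¬ b < t := by
  intro t hbt
  have hab := cElt_lt h
  rw [cElt_apply, if_pos hab, L8 hφ hab hbt] at h
  exact h rfl

lemma derived_diag {f : IncidenceAlgebra K X}
    (hf : f ∈ derivedSpan K (IncidenceAlgebra K X)) (x : X) : f x x = 0 := by
  induction hf using Submodule.span_induction with
  | mem g hg => obtain ⟨a, b, rfl⟩ := hg; exact lie_diag a b x
  | zero => rfl
  | add a b _ _ ha hb => rw [IncidenceAlgebra.add_apply, ha, hb, add_zero]
  | smul k a _ ha => rw [IncidenceAlgebra.constSMul_apply, ha, smul_zero]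

lemma eI_mem_derived (x y : X) (h : x < y) :
    eI K x y h.le ∈ derivedSpan K (IncidenceAlgebra K X) :=
  Submodule.subset_span ⟨eI K x x le_rfl, eI K x y h.le, (lie_e_eI x y h.le h.ne).symm⟩

lemma cElt_mem (φ : IncidenceAlgebra K X →ₗ[K] IncidenceAlgebra K X) :
    cElt φ ∈ derivedSpan K (IncidenceAlgebra K X) := by
  refine Submodule.sum_mem _ fun p _ => ?_
  by_cases h : p.1 < p.2
  · rw [dif_pos h]
    exact Submodule.smul_mem _ _ (eI_mem_derived p.1 p.2 h)
  · rw [dif_neg h]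
    exact Submodule.zero_mem _

lemma cElt_central (hφ : IsHalfDerivation K (IncidenceAlgebra K X) φ)
    {f : IncidenceAlgebra K X} (hf : ∀ x, f x x = 0) : ⁅cElt φ, f⁆ = 0 := by
  ext a b _
  rw [lie_apply, IncidenceAlgebra.zero_apply, IncidenceAlgebra.mul_apply,
    IncidenceAlgebra.mul_apply]
  have h1 : ∀ w ∈ Finset.Icc a b, cElt φ a w * f w b = 0 := by
    intro w hw
    by_cases hc : cElt φ a w = 0
    · rw [hc, zero_mul]
    · rcases eq_or_lt_of_le (Finset.mem_Icc.1 hw).2 with rfl | hlt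
      · rw [hf, mul_zero]
      · exact absurd hlt (cElt_max hφ hc b)
  have h2 : ∀ w ∈ Finset.Icc a b, f a w * cElt φ w b = 0 := by
    intro w hw
    by_cases hc : cElt φ w b = 0
    · rw [hc, mul_zero]
    · rcases eq_or_lt_of_le (Finset.mem_Icc.1 hw).1 with rfl | hlt
      · rw [hf, zero_mul]
      · exact absurd hlt (cElt_min hφ hc a)
  rw [Finset.sum_eq_zero h1, Finset.sum_eq_zero h2, sub_zero]

end CElt

end St17
namespace St17

variable {K X : Type*} [Field K] [PartialOrder X] [DecidableEq X] [LocallyFiniteOrder X]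

lemma lie_e_eI2 (z x y : X) (h : x ≤ y) (h1 : z ≠ x) (h2 : z ≠ y) :
    ⁅eI K z z le_rfl, eI K x y h⁆ = 0 := by
  ext a b _
  rw [eI_lie_apply, IncidenceAlgebra.zero_apply, eI_apply, eI_apply]
  split_ifs <;> simp_all <;> grind

section Psi
variable [Fintype X] [CharZero K]

/-- `ad_c` as a linear map. -/
def adcL (φ : IncidenceAlgebra K X →ₗ[K] IncidenceAlgebra K X) :
    IncidenceAlgebra K X →ₗ[K] IncidenceAlgebra K X where
  toFun a := ⁅cElt φ, a⁆
  map_add' a b := lie_add _ _ _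
  map_smul' k a := lie_smul _ _ _

/-- `ψ = φ - ad_c`. -/
def psiL (φ : IncidenceAlgebra K X →ₗ[K] IncidenceAlgebra K X) :
    IncidenceAlgebra K X →ₗ[K] IncidenceAlgebra K X := φ - adcL φ

lemma psiL_apply (φ : IncidenceAlgebra K X →ₗ[K] IncidenceAlgebra K X)
    (a : IncidenceAlgebra K X) : psiL φ a = φ a - ⁅cElt φ, a⁆ := rfl

variable {φ : IncidenceAlgebra K X →ₗ[K] IncidenceAlgebra K X}

lemma psiL_half (hφ : IsHalfDerivation K (IncidenceAlgebra K X) φ) :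
    IsHalfDerivation K (IncidenceAlgebra K X) (psiL φ) := by
  intro a b
  have hz : ⁅cElt φ, ⁅a, b⁆⁆ = 0 := cElt_central hφ (fun x => lie_diag a b x)
  have key : ⁅psiL φ a, b⁆ + ⁅a, psiL φ b⁆ = ⁅φ a, b⁆ + ⁅a, φ b⁆ := by
    rw [psiL_apply, psiL_apply, sub_lie, lie_sub]
    have hl := leibniz_lie (cElt φ) a b
    rw [hz] at hl
    have h0 : ⁅⁅cElt φ, a⁆, b⁆ = -⁅a, ⁅cElt φ, b⁆⁆ := by
      rw [eq_neg_iff_add_eq_zero]; exact hl.symm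
    rw [h0]; abel
  rw [key, show psiL φ ⁅a, b⁆ = φ ⁅a, b⁆ - ⁅cElt φ, ⁅a, b⁆⁆ from rfl, hz, sub_zero]
  exact hφ a b

lemma Dd_diag (hφ : IsHalfDerivation K (IncidenceAlgebra K X) φ) (x : X) :
    IsDiagI (psiL φ (eI K x x le_rfl)) := by
  intro u v huv
  rw [psiL_apply, IncidenceAlgebra.sub_apply]
  by_cases hle : u ≤ v
  · have hlt : u < v := lt_of_le_of_ne hle huv
    rw [lie_apply, mul_eI_apply, eI_mul_apply]
    by_cases hxv : x = v
    · subst hxv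
      rw [if_pos rfl, if_neg (fun hh : x = u => huv hh.symm), cElt_apply, if_pos hlt]
      ring
    · by_cases hxu : x = u
      · subst hxu
        rw [if_neg hxv, if_pos rfl, cElt_apply, if_pos hlt]
        linear_combination L2 hφ hlt
      · rw [if_neg hxv, if_neg hxu, L1 hφ hlt hxu hxv]
        ring
  · rw [IncidenceAlgebra.apply_eq_zero_of_not_le hle,
      IncidenceAlgebra.apply_eq_zero_of_not_le hle, sub_self]

end Psi

end St17
namespace St17

variable {K X : Type*} [Field K] [PartialOrder X] [DecidableEq X] [LocallyFiniteOrder X]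

section Psi2
variable [Fintype X] [CharZero K]

lemma cancel2 {t : K} (h : (2:K) * t = 0) : t = 0 := by
  rcases mul_eq_zero.mp h with h' | h'
  · exact absurd h' two_ne_zero
  · exact h'

lemma cancel3 {t : K} (h : (3:K) * t = 0) : t = 0 := by
  rcases mul_eq_zero.mp h with h' | h'
  · exact absurd h' three_ne_zero
  · exact h'

variable {φ : IncidenceAlgebra K X →ₗ[K] IncidenceAlgebra K X}

lemma psi_eI (hφ : IsHalfDerivation K (IncidenceAlgebra K X) φ) {x y : X} (hxy : x < y) :
    psiL φ (eI K x y hxy.le)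
      = (psiL φ (eI K x x le_rfl) x x - psiL φ (eI K x x le_rfl) y y) • eI K x y hxy.le := by
  ext a b _
  have h := halfent (psiL_half hφ) (eI K x x le_rfl) (eI K x y hxy.le) a b
  rw [lie_e_eI x y hxy.le hxy.ne, lie_eI_apply, eI_lie_apply] at h
  rw [IncidenceAlgebra.constSMul_apply, smul_eq_mul, eI_apply]
  by_cases hxa : x = a
  · subst hxa
    by_cases hyb : y = b
    · subst hyb
      rw [if_pos rfl, if_pos rfl, if_pos rfl, if_neg (fun hh : x = y => hxy.ne hh)] at h
      rw [if_pos ⟨rfl, rfl⟩, mul_one]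
      linear_combination -h
    · rw [if_neg hyb, if_pos rfl, if_pos rfl,
        Dd_diag hφ x y b (fun hh : y = b => hyb hh)] at h
      rw [if_neg (fun hh => hyb hh.2), mul_zero]
      by_cases hxb : x = b
      · subst hxb
        rw [if_pos rfl] at h
        exact cancel2 (by linear_combination -h)
      · rw [if_neg hxb] at h
        linear_combination -h
  · rw [if_neg hxa, if_neg hxa,
      show psiL φ (eI K x x le_rfl) a x = 0 from Dd_diag hφ x a x (fun hh : a = x => hxa hh.symm),
      ite_self] at h
    rw [if_neg (fun hh => hxa hh.1), mul_zero]
    by_cases hxb : x = b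
    · subst hxb
      rw [if_pos rfl] at h
      exact cancel3 (by linear_combination -h)
    · rw [if_neg hxb] at h
      exact cancel2 (by linear_combination -h)

lemma keyD (hφ : IsHalfDerivation K (IncidenceAlgebra K X) φ) {z x y : X}
    (hxy : x < y) (hzx : z ≠ x) (hzy : z ≠ y) :
    psiL φ (eI K z z le_rfl) x x = psiL φ (eI K z z le_rfl) y y := by
  have h := halfent (psiL_half hφ) (eI K z z le_rfl) (eI K x y hxy.le) x y
  rw [lie_e_eI2 z x y hxy.le hzx hzy, map_zero, IncidenceAlgebra.zero_apply, mul_zero,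
    lieL_e _ z x y hzx hzy, lie_eI_apply, if_pos rfl, if_pos rfl] at h
  linear_combination h

lemma sig2 (hφ : IsHalfDerivation K (IncidenceAlgebra K X) φ) {x y : X} (hxy : x < y) :
    psiL φ (eI K x x le_rfl) x x - psiL φ (eI K x x le_rfl) y y
      = psiL φ (eI K y y le_rfl) y y - psiL φ (eI K y y le_rfl) x x := by
  have h := halfent (psiL_half hφ) (eI K y y le_rfl) (eI K x y hxy.le) x y
  rw [lie_ey_eI x y hxy.le hxy.ne, map_neg, IncidenceAlgebra.neg_apply,
    lie_eI_apply, if_pos rfl, if_pos rfl, lieL_e3 _ y x hxy.ne'] at h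
  have hH := congr_app (psi_eI hφ hxy) x y
  rw [IncidenceAlgebra.constSMul_apply, smul_eq_mul, eI_apply, if_pos ⟨rfl, rfl⟩, mul_one] at hH
  linear_combination h - hH

/-- The map `σ`. -/
def sigA (φ : IncidenceAlgebra K X →ₗ[K] IncidenceAlgebra K X) : LtPairs X → K :=
  fun p => match p with
  | ⟨(x, y), _⟩ => psiL φ (eI K x x le_rfl) x x - psiL φ (eI K x x le_rfl) y y

lemma sigA_mk (φ : IncidenceAlgebra K X →ₗ[K] IncidenceAlgebra K X) (x y : X) (h : x < y) :
    sigA φ ⟨(x, y), h⟩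
      = psiL φ (eI K x x le_rfl) x x - psiL φ (eI K x x le_rfl) y y := rfl

lemma sig_trans1 (hφ : IsHalfDerivation K (IncidenceAlgebra K X) φ) {x y z : X}
    (hxy : x < y) (hyz : y < z) :
    sigA φ ⟨(x, y), hxy⟩ = sigA φ ⟨(x, z), hxy.trans hyz⟩ := by
  rw [sigA_mk, sigA_mk, keyD hφ hyz hxy.ne (hxy.trans hyz).ne]

lemma sig_trans2 (hφ : IsHalfDerivation K (IncidenceAlgebra K X) φ) {x y z : X}
    (hxy : x < y) (hyz : y < z) :
    sigA φ ⟨(y, z), hyz⟩ = sigA φ ⟨(x, z), hxy.trans hyz⟩ := by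
  have e1 := sig2 hφ hyz
  have e2 := sig2 hφ (hxy.trans hyz)
  have e3 := keyD hφ hxy (hxy.trans hyz).ne' hyz.ne'
  rw [sigA_mk, sigA_mk]
  linear_combination e1 - e2 + e3

lemma sig_ext (hφ : IsHalfDerivation K (IncidenceAlgebra K X) φ) {m x y M : X}
    (hmx : m ≤ x) (hxy : x < y) (hyM : y ≤ M) :
    sigA φ ⟨(x, y), hxy⟩ = sigA φ ⟨(m, M), lt_of_le_of_lt hmx (hxy.trans_le hyM)⟩ := by
  rcases eq_or_lt_of_le hmx with rfl | hmx'
  · rcases eq_or_lt_of_le hyM with rfl | hyM'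
    · rfl
    · exact sig_trans1 hφ hxy hyM'
  · rcases eq_or_lt_of_le hyM with rfl | hyM'
    · exact sig_trans2 hφ hmx' hxy
    · exact (sig_trans2 hφ hmx' hxy).trans (sig_trans1 hφ (hmx'.trans hxy) hyM')

lemma constChains (hφ : IsHalfDerivation K (IncidenceAlgebra K X) φ) :
    ConstOnChains (sigA φ) := by
  intro x y u v h1 h2 c1 _ _ c4
  rcases c1 with hxu | hux
  · rcases c4 with hyv | hvy
    · exact (sig_ext hφ (le_refl x) h1 hyv).trans (sig_ext hφ hxu h2 (le_refl v)).symm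
    · exact (sig_ext hφ hxu h2 hvy).symm
  · rcases c4 with hyv | hvy
    · exact sig_ext hφ hux h1 hyv
    · exact (sig_ext hφ hux h1 (le_refl y)).trans (sig_ext hφ (le_refl u) h2 hvy).symm

end Psi2

end St17
namespace St17

variable {K X : Type*} [Field K] [PartialOrder X] [DecidableEq X] [LocallyFiniteOrder X]
variable [Fintype X] [CharZero K]
variable {φ : IncidenceAlgebra K X →ₗ[K] IncidenceAlgebra K X}

lemma constCycles (hφ : IsHalfDerivation K (IncidenceAlgebra K X) φ) :
    ConstOnCycles (sigA φ) := by
  intro u m hcyc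
  obtain ⟨hwalk, hclose, hm4, hdist⟩ := hcyc
  have hne : ∀ i ≤ m, ∀ j ≤ m, i ≠ j → ¬(i = 0 ∧ j = m) → ¬(i = m ∧ j = 0) → u i ≠ u j := by
    intro i hi j hj hij h1 h2 heq
    rcases hdist i hi j hj hij heq with h | h
    · exact h1 h
    · exact h2 h
  set D : X → X → K := fun w t => psiL φ (eI K w w le_rfl) t t with hD
  have key2 : ∀ w a b : X, (a ⋖ b ∨ b ⋖ a) → w ≠ a → w ≠ b → D w a = D w b := by
    intro w a b hab hwa hwb
    rcases hab with h | h
    · exact keyD hφ h.lt hwa hwb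
    · exact (keyD hφ h.lt hwb hwa).symm
  have walkConst : ∀ (w : X) (a k : ℕ),
      (∀ j, a ≤ j → j < a + k → j < m ∧ u j ≠ w ∧ u (j + 1) ≠ w) →
      D w (u (a + k)) = D w (u a) := by
    intro w a k
    induction k with
    | zero => intro _; rfl
    | succ k ih =>
      intro hcond
      have h1 := hcond (a + k) (Nat.le_add_right a k) (by omega)
      calc D w (u (a + (k + 1))) = D w (u (a + k)) :=
            (key2 w _ _ (hwalk (a + k) h1.1) h1.2.1.symm h1.2.2.symm).symm
        _ = D w (u a) := ih (fun j hj hjk => hcond j hj (by omega))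
  set eL : ℕ → K := fun i => D (u i) (u i) - D (u i) (u (i + 1)) with heL
  have hLR : ∀ i < m, eL i = D (u (i + 1)) (u (i + 1)) - D (u (i + 1)) (u i) := by
    intro i him
    rcases hwalk i him with h | h
    · exact sig2 hφ h.lt
    · exact (sig2 hφ h.lt).symm
  have hstep : ∀ i, i + 1 < m → eL (i + 1) = eL i := by
    intro i hi1
    have him : i < m := by omega
    have hwne : ∀ j ≤ m, j ≠ i + 1 → u j ≠ u (i + 1) := by
      intro j hj hji
      refine hne j hj (i + 1) (by omega) hji ?_ ?_
      · rintro ⟨rfl, hh⟩; omega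
      · rintro ⟨rfl, hh⟩; omega
    have p1 : D (u (i + 1)) (u i) = D (u (i + 1)) (u 0) := by
      have := walkConst (u (i + 1)) 0 i
        (fun j hj hji => ⟨by omega, hwne j (by omega) (by omega), hwne (j + 1) (by omega) (by omega)⟩)
      simpa using this
    have p2 : D (u (i + 1)) (u m) = D (u (i + 1)) (u (i + 2)) := by
      have := walkConst (u (i + 1)) (i + 2) (m - (i + 2))
        (fun j hj hji => ⟨by omega, hwne j (by omega) (by omega), hwne (j + 1) (by omega) (by omega)⟩)
      rw [show i + 2 + (m - (i + 2)) = m from by omega] at this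
      exact this
    calc eL (i + 1) = D (u (i + 1)) (u (i + 1)) - D (u (i + 1)) (u (i + 2)) := rfl
      _ = D (u (i + 1)) (u (i + 1)) - D (u (i + 1)) (u 0) := by rw [← p2, hclose]
      _ = D (u (i + 1)) (u (i + 1)) - D (u (i + 1)) (u i) := by rw [← p1]
      _ = eL i := (hLR i him).symm
  have hall : ∀ i, i < m → eL i = eL 0 := by
    intro i
    induction i with
    | zero => intro _; rfl
    | succ k ih => intro hk; rw [hstep k hk]; exact ih (by omega)
  refine ⟨eL 0, fun i him => ⟨fun h => ?_, fun h => ?_⟩⟩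
  · have h0 : sigA φ ⟨(u i, u (i + 1)), h⟩ = eL i := rfl
    rw [h0]; exact hall i him
  · have h0 : sigA φ ⟨(u (i + 1), u i), h⟩
        = D (u (i + 1)) (u (i + 1)) - D (u (i + 1)) (u i) := rfl
    rw [h0, ← hLR i him]; exact hall i him

end St17
namespace St17

variable {K X : Type*} [Field K] [PartialOrder X] [DecidableEq X] [LocallyFiniteOrder X]

lemma lie_one_left (b : IncidenceAlgebra K X) : ⁅(1 : IncidenceAlgebra K X), b⁆ = 0 := by
  rw [Ring.lie_def, one_mul, mul_one, sub_self]

lemma lie_one_right (a : IncidenceAlgebra K X) : ⁅a, (1 : IncidenceAlgebra K X)⁆ = 0 := by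
  rw [Ring.lie_def, one_mul, mul_one, sub_self]

lemma eI_diag (x : X) : IsDiagI (eI K x x le_rfl) := by
  intro a b hab
  rw [eI_apply, if_neg]
  rintro ⟨rfl, rfl⟩; exact hab rfl

lemma eI_offdiag (x y : X) (h : x ≤ y) (hne : x ≠ y) (z : X) : eI K x y h z z = 0 := by
  rw [eI_apply, if_neg]
  rintro ⟨rfl, rfl⟩; exact hne rfl

lemma lie_e_diag0 (g : IncidenceAlgebra K X) (x a : X) :
    ⁅g, eI K x x le_rfl⁆ a a = 0 := by
  rw [lie_eI_apply]
  split_ifs with h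
  · subst h; ring
  · ring

section Kap
variable [Fintype X]

/-- `φ_κ` as a linear map. -/
def kapL (κ : X → K) : IncidenceAlgebra K X →ₗ[K] IncidenceAlgebra K X where
  toFun f := (∑ x, κ x * f x x) • 1
  map_add' f g := by
    simp only [IncidenceAlgebra.add_apply, mul_add, Finset.sum_add_distrib, add_smul]
  map_smul' k f := by
    simp only [IncidenceAlgebra.constSMul_apply, smul_eq_mul, RingHom.id_apply, smul_smul]
    congr 1
    rw [Finset.mul_sum]
    exact Finset.sum_congr rfl fun x _ => by ring

lemma kapL_apply (κ : X → K) (f : IncidenceAlgebra K X) :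
    kapL κ f = (∑ x, κ x * f x x) • (1 : IncidenceAlgebra K X) := rfl

lemma kapL_e (κ : X → K) (x : X) :
    kapL κ (eI K x x le_rfl) = κ x • (1 : IncidenceAlgebra K X) := by
  rw [kapL_apply]
  congr 1
  rw [Finset.sum_eq_single x]
  · rw [eI_apply, if_pos ⟨rfl, rfl⟩, mul_one]
  · intro z _ hz
    rw [eI_apply, if_neg (fun hh => hz hh.1.symm), mul_zero]
  · intro hmem; exact absurd (Finset.mem_univ _) hmem

lemma kapL_eI (κ : X → K) (x y : X) (h : x ≤ y) (hne : x ≠ y) :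
    kapL κ (eI K x y h) = 0 := by
  rw [kapL_apply, Finset.sum_eq_zero, zero_smul]
  intro z _
  rw [eI_offdiag x y h hne, mul_zero]

lemma kapL_lie (κ : X → K) (a b : IncidenceAlgebra K X) : kapL κ ⁅a, b⁆ = 0 := by
  rw [kapL_apply, Finset.sum_eq_zero, zero_smul]
  intro z _
  rw [lie_diag, mul_zero]

lemma smul_one_lie (s : K) (b : IncidenceAlgebra K X) :
    ⁅s • (1 : IncidenceAlgebra K X), b⁆ = 0 := by
  rw [Ring.lie_def, Algebra.smul_mul_assoc, Algebra.mul_smul_comm, one_mul, mul_one, sub_self]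

lemma lie_smul_one (s : K) (a : IncidenceAlgebra K X) :
    ⁅a, s • (1 : IncidenceAlgebra K X)⁆ = 0 := by
  rw [Ring.lie_def, Algebra.smul_mul_assoc, Algebra.mul_smul_comm, one_mul, mul_one, sub_self]

lemma kapL_half (κ : X → K) [CharZero K] :
    IsHalfDerivation K (IncidenceAlgebra K X) (kapL κ) := by
  intro a b
  rw [kapL_lie, kapL_apply, kapL_apply, smul_one_lie, lie_smul_one, add_zero, smul_zero]

lemma diag_expand (f : IncidenceAlgebra K X) (hf : IsDiagI f) :
    f = ∑ x, f x x • eI K x x le_rfl := by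
  ext a b _
  rw [sum_apply]
  by_cases hab : a = b
  · subst hab
    rw [Finset.sum_eq_single a]
    · rw [IncidenceAlgebra.constSMul_apply, smul_eq_mul, eI_apply, if_pos ⟨rfl, rfl⟩, mul_one]
    · intro z _ hz
      rw [IncidenceAlgebra.constSMul_apply, smul_eq_mul, eI_apply,
        if_neg (fun hh => hz hh.1), mul_zero]
    · intro hmem; exact absurd (Finset.mem_univ _) hmem
  · rw [hf a b hab, Finset.sum_eq_zero]
    intro z _
    rw [IncidenceAlgebra.constSMul_apply, smul_eq_mul, eI_apply,
      if_neg (fun hh => hab (hh.1.symm.trans hh.2)), mul_zero]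

end Kap

section HalfSub
variable [Fintype X] [CharZero K]

lemma half_sub {φ1 φ2 : IncidenceAlgebra K X →ₗ[K] IncidenceAlgebra K X}
    (h1 : IsHalfDerivation K (IncidenceAlgebra K X) φ1)
    (h2 : IsHalfDerivation K (IncidenceAlgebra K X) φ2) :
    IsHalfDerivation K (IncidenceAlgebra K X) (φ1 - φ2) := by
  intro a b
  simp only [LinearMap.sub_apply]
  rw [h1 a b, h2 a b, sub_lie, lie_sub, ← smul_sub]
  congr 1
  abel

end HalfSub

end St17

open St17


/-- every `1/2`-derivation `φ` of `I(X,K)` is uniquely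
`φ = ad_c + φ_σ + φ_κ` with `c ∈ Z([I(X,K), I(X,K)])`, `σ : X²_< → K` constant on
chains and cycles, and `κ : X → K`. -/
theorem statement17 (K X : Type*) [Field K] [CharZero K] [PartialOrder X] [Fintype X]
    [LocallyFiniteOrder X] [DecidableEq X] (hconn : ConnectedPoset X) (u0 : X)
    (φ : IncidenceAlgebra K X →ₗ[K] IncidenceAlgebra K X)
    (hφ : IsHalfDerivation K (IncidenceAlgebra K X) φ) :
    ∃! t : IncidenceAlgebra K X × (LtPairs X → K) × (X → K),
      (t.1 ∈ derivedSpan K (IncidenceAlgebra K X) ∧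
        ∀ f ∈ derivedSpan K (IncidenceAlgebra K X), ⁅t.1, f⁆ = 0) ∧
      ConstOnChains t.2.1 ∧ ConstOnCycles t.2.1 ∧
      ∃ φσ φκ : IncidenceAlgebra K X →ₗ[K] IncidenceAlgebra K X,
        IsHalfDerivation K (IncidenceAlgebra K X) φσ ∧
        (∀ f : IncidenceAlgebra K X, IsDiagI f → IsDiagI (φσ f)) ∧
        (∀ (x y : X) (h : x < y),
            φσ (eI K x y h.le) = t.2.1 ⟨(x, y), h⟩ • eI K x y h.le) ∧
        (∀ x : X, φσ (eI K x x le_rfl) u0 u0 = 0) ∧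
        (∀ x : X, φκ (eI K x x le_rfl) = t.2.2 x • (1 : IncidenceAlgebra K X)) ∧
        (∀ (x y : X) (h : x < y), φκ (eI K x y h.le) = 0) ∧
        (∀ a : IncidenceAlgebra K X, φ a = ⁅t.1, a⁆ + φσ a + φκ a) := by
  set κv : X → K := fun x => psiL φ (eI K x x le_rfl) u0 u0 with hκv
  refine ⟨⟨cElt φ, sigA φ, κv⟩,
    ⟨⟨cElt_mem φ, fun f hf => cElt_central hφ (fun x => derived_diag hf x)⟩,
      constChains hφ, constCycles hφ,
      psiL φ - kapL κv, kapL κv, ?_, ?_, ?_, ?_, ?_, ?_, ?_⟩, ?_⟩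
  · exact half_sub (psiL_half hφ) (kapL_half κv)
  · intro f hf a b hab
    rw [diag_expand f hf, map_sum, St17.sum_apply]
    refine Finset.sum_eq_zero fun x _ => ?_
    rw [map_smul, IncidenceAlgebra.constSMul_apply, smul_eq_mul, LinearMap.sub_apply,
      IncidenceAlgebra.sub_apply, Dd_diag hφ x a b hab, kapL_e,
      IncidenceAlgebra.constSMul_apply, smul_eq_mul, IncidenceAlgebra.one_apply,
      if_neg hab, mul_zero, sub_zero, mul_zero]
  · intro x y h
    rw [LinearMap.sub_apply, kapL_eI κv x y h.le h.ne, sub_zero, psi_eI hφ h]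
    rfl
  · intro x
    rw [LinearMap.sub_apply, IncidenceAlgebra.sub_apply, kapL_e,
      IncidenceAlgebra.constSMul_apply, smul_eq_mul, IncidenceAlgebra.one_apply,
      if_pos rfl, mul_one]
    exact sub_eq_zero.mpr rfl
  · exact fun x => kapL_e κv x
  · exact fun x y h => kapL_eI κv x y h.le h.ne
  · intro a
    simp only [LinearMap.sub_apply]
    rw [psiL_apply]
    abel
  · rintro ⟨c', σ', κ'⟩ ⟨⟨hc'mem, hc'cent⟩, -, -, φσ', φκ', -, hσ'diag, hσ'eI, hσ'u0,
      hκ'e, hκ'eI, hdec'⟩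
    have hσ : σ' = sigA φ := by
      funext p
      obtain ⟨⟨x, y⟩, hxy⟩ := p
      have hz' : ⁅c', eI K x y hxy.le⁆ = 0 := hc'cent _ (eI_mem_derived x y hxy)
      have hz : ⁅cElt φ, eI K x y hxy.le⁆ = 0 :=
        cElt_central hφ (fun z => eI_offdiag x y hxy.le hxy.ne z)
      have hd := hdec' (eI K x y hxy.le)
      rw [hσ'eI x y hxy, hκ'eI x y hxy, hz', zero_add, add_zero] at hd
      have hour : φ (eI K x y hxy.le) = sigA φ ⟨(x, y), hxy⟩ • eI K x y hxy.le := by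
        have hp := psi_eI hφ hxy
        rw [psiL_apply, hz, sub_zero] at hp
        rw [hp, sigA_mk]
      have hval := congr_app (hd.symm.trans hour) x y
      rw [IncidenceAlgebra.constSMul_apply, IncidenceAlgebra.constSMul_apply, smul_eq_mul,
        smul_eq_mul, eI_apply, if_pos ⟨rfl, rfl⟩, mul_one, mul_one] at hval
      exact hval
    have heq : ∀ x : X, ⁅c', eI K x x le_rfl⁆ + φσ' (eI K x x le_rfl) + κ' x • 1
        = ⁅cElt φ, eI K x x le_rfl⁆ + psiL φ (eI K x x le_rfl) := by
      intro x
      have hd := hdec' (eI K x x le_rfl)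
      rw [hκ'e x] at hd
      rw [← hd, psiL_apply]
      abel
    have hc : c' = cElt φ := by
      ext a b _
      by_cases h : a = b
      · subst h; rw [derived_diag hc'mem, derived_diag (cElt_mem φ)]
      · have h1 := congr_app (heq b) a b
        rw [IncidenceAlgebra.add_apply, IncidenceAlgebra.add_apply,
          IncidenceAlgebra.add_apply, hσ'diag _ (eI_diag b) a b h, Dd_diag hφ b a b h,
          IncidenceAlgebra.constSMul_apply, smul_eq_mul, IncidenceAlgebra.one_apply,
          if_neg h, mul_zero] at h1
        simp only [add_zero] at h1
        rw [lie_eI_apply, lie_eI_apply, if_pos rfl, if_pos rfl,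
          if_neg (fun hh : b = a => h hh.symm), if_neg (fun hh : b = a => h hh.symm),
          sub_zero, sub_zero] at h1
        exact h1
    have hκ : κ' = κv := by
      funext x
      have h1 := congr_app (heq x) u0 u0
      rw [IncidenceAlgebra.add_apply, IncidenceAlgebra.add_apply,
        IncidenceAlgebra.add_apply, lie_e_diag0, lie_e_diag0, hσ'u0 x,
        IncidenceAlgebra.constSMul_apply, smul_eq_mul, IncidenceAlgebra.one_apply,
        if_pos rfl, mul_one] at h1
      simp only [zero_add] at h1
      exact h1
    subst hσ
    subst hc
    subst hκ
    rfl
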